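/- In a residuated lattice, for a filter F and elements x, y: F(F ∪ {x}) ∩ F(F ∪ {y}) = F(F ∪ {x ∨ y}), where F(X) denotes the filter generated by X. -/
import Mathlib


universe u

class ResiduatedLattice (A : Type u) extends Lattice A, BoundedOrder A where
  mul : A → A → A
  himp : A → A → A
  mul_comm : ∀ x y : A, mul x y = mul y x
  mul_assoc : ∀ x y z : A, mul (mul x y) z = mul x (mul y z)
  mul_top : ∀ x : A, mul x ⊤ = x
  adjoint : ∀ x y z : A, mul x y ≤ z ↔ x ≤ himp y z

namespace RL

variable {A : Type u} [ResiduatedLattice A]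

/-- A filter: a nonempty subset closed under the monoid operation `⊙` and closed
under joins with arbitrary elements. -/
def IsFilter (F : Set A) : Prop :=
  F.Nonempty ∧ (∀ x ∈ F, ∀ y ∈ F, ResiduatedLattice.mul x y ∈ F) ∧
    (∀ x ∈ F, ∀ y : A, x ⊔ y ∈ F)

/-- A prime filter: a proper filter such that `x ⊔ y ∈ P` implies `x ∈ P` or `y ∈ P`. -/
def IsPrime (P : Set A) : Prop :=
  IsFilter P ∧ P ≠ Set.univ ∧ ∀ x y : A, x ⊔ y ∈ P → x ∈ P ∨ y ∈ P

/-- The filter generated by a subset `X`. -/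
def Fgen (X : Set A) : Set A := ⋂₀ {G : Set A | IsFilter G ∧ X ⊆ G}

/-- An `X`-minimal prime filter: a minimal element of the set of prime filters containing `X`. -/
def MinPrimeOver (X : Set A) (P : Set A) : Prop :=
  IsPrime P ∧ X ⊆ P ∧ ∀ Q : Set A, IsPrime Q → X ⊆ Q → Q ⊆ P → Q = P

/-- A minimal prime filter. -/
def MinPrime (P : Set A) : Prop :=
  IsPrime P ∧ ∀ Q : Set A, IsPrime Q → Q ⊆ P → Q = P

/-- The coannihilator of `X` belonging to `F`. -/
def coann (F : Set A) (X : Set A) : Set A := {a : A | ∀ x ∈ X, x ⊔ a ∈ F}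

/-- `X^⊥ = {a | x ⊔ a = ⊤ for all x ∈ X}`. -/
def perp (X : Set A) : Set A := {a : A | ∀ x ∈ X, x ⊔ a = ⊤}

/-- `D_F(P) = {a | (F : a) ⊄ P}`. -/
def DF (F P : Set A) : Set A := {a : A | ¬ coann F {a} ⊆ P}

/-- A `∨`-closed subset: nonempty and closed under joins. -/
def VClosed (C : Set A) : Prop := C.Nonempty ∧ ∀ x ∈ C, ∀ y ∈ C, x ⊔ y ∈ C

end RL

namespace RLAux

local infixl:70 " ⊙ " => ResiduatedLattice.mul

variable {A : Type u} [ResiduatedLattice A]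

lemma mull {a b : A} (c : A) (h : a ≤ b) : c ⊙ a ≤ c ⊙ b := by
  rw [ResiduatedLattice.mul_comm c a, ResiduatedLattice.adjoint]
  refine le_trans h ?_
  rw [← ResiduatedLattice.adjoint, ResiduatedLattice.mul_comm]

lemma mulr {a b : A} (c : A) (h : a ≤ b) : a ⊙ c ≤ b ⊙ c := by
  rw [ResiduatedLattice.mul_comm a c, ResiduatedLattice.mul_comm b c]
  exact mull c h

lemma mul_le_left (a b : A) : a ⊙ b ≤ a := by
  have := mull (a := b) (b := ⊤) a le_top
  rwa [ResiduatedLattice.mul_top] at this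

lemma mul_le_right (a b : A) : a ⊙ b ≤ b := by
  rw [ResiduatedLattice.mul_comm]; exact mul_le_left b a

lemma mul_sup (a b c : A) : a ⊙ (b ⊔ c) = (a ⊙ b) ⊔ (a ⊙ c) := by
  apply le_antisymm
  · rw [ResiduatedLattice.mul_comm, ResiduatedLattice.adjoint]
    apply sup_le
    · rw [← ResiduatedLattice.adjoint, ResiduatedLattice.mul_comm]; exact le_sup_left
    · rw [← ResiduatedLattice.adjoint, ResiduatedLattice.mul_comm]; exact le_sup_right
  · exact sup_le (mull a le_sup_left) (mull a le_sup_right)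

lemma sup_mul (a b c : A) : (a ⊔ b) ⊙ c = (a ⊙ c) ⊔ (b ⊙ c) := by
  rw [ResiduatedLattice.mul_comm, mul_sup, ResiduatedLattice.mul_comm c a,
    ResiduatedLattice.mul_comm c b]

/-- `pw x n = xⁿ`, with `x⁰ = ⊤`. -/
def pw (x : A) : ℕ → A
  | 0 => ⊤
  | n + 1 => x ⊙ pw x n

lemma pw_mono {x z : A} (h : x ≤ z) : ∀ n, pw x n ≤ pw z n
  | 0 => le_rfl
  | n + 1 => le_trans (mull x (pw_mono h n)) (mulr (pw z n) h)

lemma pw_add (x : A) (m n : ℕ) : pw x (m + n) = pw x m ⊙ pw x n := by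
  induction m with
  | zero =>
    simp only [Nat.zero_add, pw]
    rw [ResiduatedLattice.mul_comm, ResiduatedLattice.mul_top]
  | succ m ih =>
    have : m + 1 + n = (m + n) + 1 := by omega
    rw [this]
    show x ⊙ pw x (m + n) = (x ⊙ pw x m) ⊙ pw x n
    rw [ih, ResiduatedLattice.mul_assoc]

lemma pw_pw (x : A) (m n : ℕ) : pw x (m * n) = pw (pw x m) n := by
  induction n with
  | zero => simp [pw]
  | succ n ih =>
    show pw x (m * (n + 1)) = pw x m ⊙ pw (pw x m) n
    rw [← ih, ← pw_add]
    congr 1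
    ring

lemma pw_sup_le (x z : A) : ∀ n, pw (x ⊔ z) n ≤ pw x n ⊔ z
  | 0 => le_sup_left
  | n + 1 => by
    show (x ⊔ z) ⊙ pw (x ⊔ z) n ≤ pw x (n + 1) ⊔ z
    calc (x ⊔ z) ⊙ pw (x ⊔ z) n ≤ (x ⊔ z) ⊙ (pw x n ⊔ z) := mull _ (pw_sup_le x z n)
    _ = (x ⊙ pw x n ⊔ z ⊙ pw x n) ⊔ (x ⊙ z ⊔ z ⊙ z) := by rw [mul_sup, sup_mul, sup_mul]
    _ ≤ pw x (n + 1) ⊔ z := by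
        apply sup_le (sup_le _ _) (sup_le _ _)
        · exact le_sup_left
        · exact le_trans (mul_le_left z _) le_sup_right
        · exact le_trans (mul_le_right x z) le_sup_right
        · exact le_trans (mul_le_left z z) le_sup_right

/-- Key inequality: `(x ⊔ y)^(m·n) ≤ xⁿ ⊔ yᵐ`. -/
lemma pw_sup_le_sup (x y : A) (n m : ℕ) : pw (x ⊔ y) (m * n) ≤ pw x n ⊔ pw y m := by
  rw [pw_pw]
  have h1 : pw (x ⊔ y) m ≤ x ⊔ pw y m := by
    rw [sup_comm x y]
    exact le_trans (pw_sup_le y x m) (by rw [sup_comm])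
  calc pw (pw (x ⊔ y) m) n ≤ pw (x ⊔ pw y m) n := pw_mono h1 n
  _ ≤ pw x n ⊔ pw y m := pw_sup_le x (pw y m) n

lemma filter_upward {G : Set A} (hG : RL.IsFilter G) {a b : A} (ha : a ∈ G) (h : a ≤ b) :
    b ∈ G := by
  have := hG.2.2 a ha b
  rwa [sup_eq_right.mpr h] at this

lemma top_mem {G : Set A} (hG : RL.IsFilter G) : (⊤ : A) ∈ G := by
  obtain ⟨a, ha⟩ := hG.1
  exact filter_upward hG ha le_top

lemma pw_mem {G : Set A} (hG : RL.IsFilter G) {z : A} (hz : z ∈ G) : ∀ n, pw z n ∈ G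
  | 0 => top_mem hG
  | n + 1 => hG.2.1 z hz _ (pw_mem hG hz n)

/-- The explicit description of the filter generated by `F ∪ {x}`. -/
def Sgen (F : Set A) (x : A) : Set A := {a : A | ∃ f ∈ F, ∃ n : ℕ, f ⊙ pw x n ≤ a}

lemma Sgen_isFilter {F : Set A} (hF : RL.IsFilter F) (x : A) : RL.IsFilter (Sgen F x) := by
  obtain ⟨f0, hf0⟩ := hF.1
  refine ⟨⟨f0, f0, hf0, 0, ?_⟩, ?_, ?_⟩
  · rw [show pw x 0 = (⊤ : A) from rfl, ResiduatedLattice.mul_top]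
  · rintro a ⟨f, hf, n, hfn⟩ b ⟨g, hg, m, hgm⟩
    refine ⟨f ⊙ g, hF.2.1 f hf g hg, n + m, ?_⟩
    calc (f ⊙ g) ⊙ pw x (n + m) = (f ⊙ pw x n) ⊙ (g ⊙ pw x m) := by
          rw [pw_add, ResiduatedLattice.mul_assoc, ResiduatedLattice.mul_assoc]
          congr 1
          rw [← ResiduatedLattice.mul_assoc, ← ResiduatedLattice.mul_assoc,
            ResiduatedLattice.mul_comm g (pw x n)]
    _ ≤ a ⊙ b := le_trans (mulr _ hfn) (mull a hgm)
  · rintro a ⟨f, hf, n, hfn⟩ b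
    exact ⟨f, hf, n, le_trans hfn le_sup_left⟩

lemma mem_Sgen_of_mem_Fgen {F : Set A} (hF : RL.IsFilter F) {x a : A}
    (ha : a ∈ RL.Fgen (F ∪ {x})) : a ∈ Sgen F x := by
  apply ha
  refine ⟨Sgen_isFilter hF x, ?_⟩
  rintro z (hz | hz)
  · obtain ⟨f0, hf0⟩ := hF.1
    exact ⟨z, hz, 0, by rw [show pw x 0 = (⊤ : A) from rfl, ResiduatedLattice.mul_top]⟩
  · obtain ⟨f0, hf0⟩ := hF.1
    refine ⟨f0, hf0, 1, ?_⟩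
    rw [Set.mem_singleton_iff] at hz
    subst hz
    calc f0 ⊙ pw z 1 ≤ pw z 1 := mul_le_right _ _
    _ = z ⊙ ⊤ := rfl
    _ = z := ResiduatedLattice.mul_top z

end RLAux

theorem fgen_inter_sup {A : Type u} [ResiduatedLattice A] (F : Set A) (hF : RL.IsFilter F)
    (x y : A) :
    RL.Fgen (F ∪ {x}) ∩ RL.Fgen (F ∪ {y}) = RL.Fgen (F ∪ {x ⊔ y}) := by
  open RLAux in
  ext a
  constructor
  · rintro ⟨hax, hay⟩
    obtain ⟨f, hf, n, hfn⟩ := mem_Sgen_of_mem_Fgen hF hax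
    obtain ⟨g, hg, m, hgm⟩ := mem_Sgen_of_mem_Fgen hF hay
    rintro G ⟨hG, hsub⟩
    have hxyG : x ⊔ y ∈ G := hsub (Or.inr rfl)
    have hfG : f ∈ G := hsub (Or.inl hf)
    have hgG : g ∈ G := hsub (Or.inl hg)
    have hmem : ResiduatedLattice.mul (ResiduatedLattice.mul f g) (pw (x ⊔ y) (m * n)) ∈ G :=
      hG.2.1 _ (hG.2.1 f hfG g hgG) _ (pw_mem hG hxyG (m * n))
    refine filter_upward hG hmem ?_
    calc ResiduatedLattice.mul (ResiduatedLattice.mul f g) (pw (x ⊔ y) (m * n))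
        ≤ ResiduatedLattice.mul (ResiduatedLattice.mul f g) (pw x n ⊔ pw y m) :=
          mull _ (pw_sup_le_sup x y n m)
      _ = ResiduatedLattice.mul (ResiduatedLattice.mul f g) (pw x n)
          ⊔ ResiduatedLattice.mul (ResiduatedLattice.mul f g) (pw y m) := mul_sup _ _ _
      _ ≤ a := by
          apply sup_le
          · exact le_trans (mulr _ (mul_le_left f g)) hfn
          · exact le_trans (mulr _ (mul_le_right f g)) hgm
  · intro ha
    constructor
    · rintro G ⟨hG, hsub⟩
      refine ha G ⟨hG, ?_⟩
      rintro z (hz | hz)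
      · exact hsub (Or.inl hz)
      · rw [Set.mem_singleton_iff] at hz
        subst hz
        exact hG.2.2 x (hsub (Or.inr rfl)) y
    · rintro G ⟨hG, hsub⟩
      refine ha G ⟨hG, ?_⟩
      rintro z (hz | hz)
      · exact hsub (Or.inl hz)
      · rw [Set.mem_singleton_iff] at hz
        subst hz
        rw [sup_comm]
        exact hG.2.2 y (hsub (Or.inr rfl)) x
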